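/- arXiv:1912.00459 — 3 statements merged into one kernel-verified Lean document; each statement's English description precedes it below -/
import Mathlib

section
/- Correctness of the Partition reduction for zero sharings (forward direction): if the Partition instance a_1,…,a_p with sum 2T has an equal-sum split, then the constructed n-agent instance admits an envy-free (hence proportional) allocation with zero sharings. -/
open Finset

/-- `z` is a feasible fractional allocation (agents `A`, goods `G`). -/
def isAlloc {A G : Type*} [Fintype A] [Fintype G] (z : A → G → ℝ) : Prop :=
  (∀ i o, 0 ≤ z i o) ∧ ∀ o, ∑ i, z i o = 1

/-- Agent `i`'s additive value for agent `j`'s bundle in allocation `z`. -/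
noncomputable def ubundle {A G : Type*} [Fintype G] (v z : A → G → ℝ) (i j : A) : ℝ :=
  ∑ o, v i o * z j o

/-- Forward direction of the Partition reduction for zero sharings: if the Partition
instance `a₁,…,a_p` (sum `2T`) has an equal-sum split, then the constructed `n`-agent
instance (Alice = `inl 0`, Bob = `inl 1`, personal agents = `inr k`; number goods
`inl o`, personal goods `inr k`) admits an envy-free integral (zero-sharing) allocation. -/
theorem partition_reduction_forward (n p : ℕ) (hn : 2 ≤ n) (hp : 0 < p) (T : ℕ)
    (a : Fin p → ℕ) (ha : ∀ o, 0 < a o) (hasum : ∑ o, a o = 2 * T)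
    (b : Fin p → ℝ) (hb : ∀ o, 0 < b o) (hbsum : ∑ o, b o = 1/2)
    (c : Fin (n - 2) → ℝ) (hc : ∀ k, 0 < c k) (hcsum : ∑ k, c k = 1/2)
    (e : Fin (n - 2) → (Fin p ⊕ Fin (n - 2)) → ℝ) (he : ∀ k g, 0 < e k g)
    (hesum : ∀ k, ∑ g ∈ univ.erase (Sum.inr k), e k g = 1/2)
    (v : (Fin 2 ⊕ Fin (n - 2)) → (Fin p ⊕ Fin (n - 2)) → ℝ)
    (hvA : ∀ o, v (Sum.inl 0) (Sum.inl o) = a o)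
    (hvA' : ∀ k, v (Sum.inl 0) (Sum.inr k) = T)
    (hvB : ∀ o, v (Sum.inl 1) (Sum.inl o) = a o + b o)
    (hvB' : ∀ k, v (Sum.inl 1) (Sum.inr k) = T - c k)
    (hvP : ∀ k g, v (Sum.inr k) g = if g = Sum.inr k then (n : ℝ) * T - 1/2 else e k g)
    (hpart : ∃ X : Finset (Fin p), ∑ o ∈ X, a o = T) :
    ∃ z : (Fin 2 ⊕ Fin (n - 2)) → (Fin p ⊕ Fin (n - 2)) → ℝ,
      isAlloc z ∧ (∀ i g, z i g = 0 ∨ z i g = 1) ∧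
      ∀ i j, ubundle v z i j ≤ ubundle v z i i := by
  classical
  -- T ≥ 1
  have hT1 : 1 ≤ T := by
    have h0 : 0 < ∑ o, a o := Finset.sum_pos (fun o _ => ha o) ⟨⟨0, hp⟩, mem_univ _⟩
    omega
  have hT1R : (1 : ℝ) ≤ (T : ℕ) := by exact_mod_cast hT1
  have hnT : (1 : ℝ) ≤ (n : ℝ) * T := by
    have h2 : (2 : ℝ) ≤ (n : ℝ) := by exact_mod_cast hn
    nlinarith
  obtain ⟨X, hX⟩ := hpart
  -- choose the side of the partition on which b-values are large; Bob gets Y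
  obtain ⟨Y, hYa, hYb⟩ : ∃ Y : Finset (Fin p),
      ∑ o ∈ Y, a o = T ∧ 1/4 ≤ ∑ o ∈ Y, b o := by
    by_cases hXb : (1/4 : ℝ) ≤ ∑ o ∈ X, b o
    · exact ⟨X, hX, hXb⟩
    · refine ⟨Xᶜ, ?_, ?_⟩
      · have h1 := Finset.sum_add_sum_compl X a
        rw [hX, hasum] at h1
        omega
      · have h2 := Finset.sum_add_sum_compl X b
        rw [hbsum] at h2
        linarith
  have hYaR : ∑ o ∈ Y, (a o : ℝ) = T := by exact_mod_cast hYa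
  have hYcA : ∑ o ∈ Yᶜ, (a o : ℝ) = T := by
    have h1 := Finset.sum_add_sum_compl Y a
    rw [hYa, hasum] at h1
    have h2 : ∑ o ∈ Yᶜ, a o = T := by omega
    exact_mod_cast h2
  have hYcb : ∑ o ∈ Yᶜ, b o = 1/2 - ∑ o ∈ Y, b o := by
    have h2 := Finset.sum_add_sum_compl Y b
    rw [hbsum] at h2
    linarith
  -- bounds on e
  have hEsub : ∀ (S : Finset (Fin p)) (k : Fin (n-2)),
      ∑ o ∈ S, e k (Sum.inl o) ≤ 1/2 := by
    intro S k
    have h1 : ∑ o ∈ S, e k (Sum.inl o) = ∑ g ∈ S.image Sum.inl, e k g :=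
      (Finset.sum_image (by intro x _ y _ h; exact Sum.inl_injective h)).symm
    rw [h1, ← hesum k]
    refine Finset.sum_le_sum_of_subset_of_nonneg ?_ (fun g _ _ => (he k g).le)
    intro g hg
    obtain ⟨o, _, rfl⟩ := Finset.mem_image.mp hg
    exact Finset.mem_erase.mpr ⟨by simp, Finset.mem_univ _⟩
  have hEone : ∀ (k k' : Fin (n-2)), k' ≠ k → e k (Sum.inr k') ≤ 1/2 := by
    intro k k' hkk
    rw [← hesum k]
    refine Finset.single_le_sum (fun g _ => (he k g).le) ?_
    exact Finset.mem_erase.mpr ⟨by simp [hkk], Finset.mem_univ _⟩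
  -- the allocation
  set z : (Fin 2 ⊕ Fin (n - 2)) → (Fin p ⊕ Fin (n - 2)) → ℝ :=
    Sum.elim
      (fun j => Sum.elim (fun o => if (j = 1 ↔ o ∈ Y) then (1:ℝ) else 0) (fun _ => 0))
      (fun k => Sum.elim (fun _ => 0) (fun k' => if k' = k then (1:ℝ) else 0)) with hzdef
  refine ⟨z, ⟨?_, ?_⟩, ?_, ?_⟩
  · -- nonnegativity
    intro i g
    rcases i with j | k <;> rcases g with o | k' <;>
      simp only [hzdef, Sum.elim_inl, Sum.elim_inr] <;> (try split_ifs) <;> norm_num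
  · -- feasibility
    intro g
    rw [Fintype.sum_sum_type]
    rcases g with o | k
    · simp only [hzdef, Sum.elim_inl, Sum.elim_inr]
      by_cases ho : o ∈ Y <;>
        simp [Fin.sum_univ_two, ho, show (0 : Fin 2) ≠ 1 by decide]
    · simp [hzdef, Finset.sum_ite_eq' (univ : Finset (Fin (n-2))) k fun _ => (1:ℝ)]
  · -- integrality
    intro i g
    rcases i with j | k <;> rcases g with o | k' <;>
      simp only [hzdef, Sum.elim_inl, Sum.elim_inr] <;> (try split_ifs) <;> simp
  · -- envy-freeness
    have key0 : ∀ i, ubundle v z i (Sum.inl 0) = ∑ o ∈ Yᶜ, v i (Sum.inl o) := by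
      intro i
      rw [ubundle, Fintype.sum_sum_type]
      have h1 : ∀ o : Fin p, v i (Sum.inl o) * z (Sum.inl 0) (Sum.inl o)
          = if o ∈ Yᶜ then v i (Sum.inl o) else 0 := by
        intro o
        by_cases ho : o ∈ Y <;>
          simp [hzdef, ho, show (0 : Fin 2) ≠ 1 by decide]
      rw [Finset.sum_congr rfl (fun o _ => h1 o), Finset.sum_ite_mem, Finset.univ_inter]
      have h2 : ∑ k, v i (Sum.inr k) * z (Sum.inl 0) (Sum.inr k) = 0 := by simp [hzdef]
      rw [h2, add_zero]
    have key1 : ∀ i, ubundle v z i (Sum.inl 1) = ∑ o ∈ Y, v i (Sum.inl o) := by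
      intro i
      rw [ubundle, Fintype.sum_sum_type]
      have h1 : ∀ o : Fin p, v i (Sum.inl o) * z (Sum.inl 1) (Sum.inl o)
          = if o ∈ Y then v i (Sum.inl o) else 0 := by
        intro o
        by_cases ho : o ∈ Y <;> simp [hzdef, ho]
      rw [Finset.sum_congr rfl (fun o _ => h1 o), Finset.sum_ite_mem, Finset.univ_inter]
      have h2 : ∑ k, v i (Sum.inr k) * z (Sum.inl 1) (Sum.inr k) = 0 := by simp [hzdef]
      rw [h2, add_zero]
    have keyk : ∀ i k, ubundle v z i (Sum.inr k) = v i (Sum.inr k) := by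
      intro i k
      rw [ubundle, Fintype.sum_sum_type]
      simp [hzdef, mul_ite, Finset.sum_ite_eq' (univ : Finset (Fin (n-2))) k]
    -- Alice's bundle values
    have hA0 : ubundle v z (Sum.inl 0) (Sum.inl 0) = T := by
      rw [key0]; simp only [hvA]; exact hYcA
    have hA1 : ubundle v z (Sum.inl 0) (Sum.inl 1) = T := by
      rw [key1]; simp only [hvA]; exact hYaR
    have hAk : ∀ k, ubundle v z (Sum.inl 0) (Sum.inr k) = T := by
      intro k; rw [keyk]; exact hvA' k
    -- Bob's bundle values
    have hB1 : ubundle v z (Sum.inl 1) (Sum.inl 1) = T + ∑ o ∈ Y, b o := by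
      rw [key1]; simp only [hvB]; rw [Finset.sum_add_distrib, hYaR]
    have hB0 : ubundle v z (Sum.inl 1) (Sum.inl 0) = T + (1/2 - ∑ o ∈ Y, b o) := by
      rw [key0]; simp only [hvB]; rw [Finset.sum_add_distrib, hYcA, hYcb]
    have hBk : ∀ k, ubundle v z (Sum.inl 1) (Sum.inr k) = T - c k := by
      intro k; rw [keyk]; exact hvB' k
    -- personal agents' bundle values
    have hPown : ∀ k, ubundle v z (Sum.inr k) (Sum.inr k) = (n : ℝ) * T - 1/2 := by
      intro k; rw [keyk, hvP]; simp
    have hP0 : ∀ k, ubundle v z (Sum.inr k) (Sum.inl 0) = ∑ o ∈ Yᶜ, e k (Sum.inl o) := by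
      intro k; rw [key0]
      exact Finset.sum_congr rfl fun o _ => by rw [hvP]; simp
    have hP1 : ∀ k, ubundle v z (Sum.inr k) (Sum.inl 1) = ∑ o ∈ Y, e k (Sum.inl o) := by
      intro k; rw [key1]
      exact Finset.sum_congr rfl fun o _ => by rw [hvP]; simp
    intro i j
    rcases i with ji | ki
    · rcases (show ji = 0 ∨ ji = 1 by omega) with rfl | rfl
      · -- Alice
        rw [hA0]
        rcases j with jj | kj
        · rcases (show jj = 0 ∨ jj = 1 by omega) with rfl | rfl
          · rw [hA0]
          · rw [hA1]
        · rw [hAk]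
      · -- Bob
        rw [hB1]
        rcases j with jj | kj
        · rcases (show jj = 0 ∨ jj = 1 by omega) with rfl | rfl
          · rw [hB0]; linarith
          · rw [hB1]
        · rw [hBk]; have := hc kj; linarith
    · -- personal agent ki
      rw [hPown]
      rcases j with jj | kj
      · rcases (show jj = 0 ∨ jj = 1 by omega) with rfl | rfl
        · rw [hP0]; have := hEsub Yᶜ ki; linarith
        · rw [hP1]; have := hEsub Y ki; linarith
      · by_cases hkk : kj = ki
        · subst hkk; rw [hPown]
        · rw [keyk, hvP]
          simp only [Sum.inr.injEq, hkk, if_false]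
          have := hEone ki kj hkk
          linarith
end

section
/- Correctness of the Partition reduction for zero sharings (backward direction): if the constructed n-agent instance admits a proportional allocation with zero sharings, then the Partition instance a_1,…,a_p has an equal-sum split. -/
open Finset

lemma aux_zero {ι : Type*} [Fintype ι] [DecidableEq ι] (f : ι → ℝ) (hf : ∀ i, 0 ≤ f i)
    (hsum : ∑ i, f i = 1) {i j : ι} (hij : i ≠ j) (hj : f j = 1) : f i = 0 := by
  have h := Finset.sum_le_sum_of_subset_of_nonneg (Finset.subset_univ {i, j})
    (fun k _ _ => hf k)
  rw [Finset.sum_pair hij, hsum, hj] at h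
  linarith [hf i]

/-- Backward direction of the Partition reduction for zero sharings: if the constructed
`n`-agent instance admits a proportional allocation with zero sharings (an integral
allocation giving each agent at least `Vᵢ/n`), then the Partition instance has an
equal-sum split. -/
theorem partition_reduction_backward (n p : ℕ) (hn : 2 ≤ n) (hp : 0 < p) (T : ℕ)
    (a : Fin p → ℕ) (ha : ∀ o, 0 < a o) (hasum : ∑ o, a o = 2 * T)
    (b : Fin p → ℝ) (hb : ∀ o, 0 < b o) (hbsum : ∑ o, b o = 1/2)
    (c : Fin (n - 2) → ℝ) (hc : ∀ k, 0 < c k) (hcsum : ∑ k, c k = 1/2)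
    (e : Fin (n - 2) → (Fin p ⊕ Fin (n - 2)) → ℝ) (he : ∀ k g, 0 < e k g)
    (hesum : ∀ k, ∑ g ∈ univ.erase (Sum.inr k), e k g = 1/2)
    (v : (Fin 2 ⊕ Fin (n - 2)) → (Fin p ⊕ Fin (n - 2)) → ℝ)
    (hvA : ∀ o, v (Sum.inl 0) (Sum.inl o) = a o)
    (hvA' : ∀ k, v (Sum.inl 0) (Sum.inr k) = T)
    (hvB : ∀ o, v (Sum.inl 1) (Sum.inl o) = a o + b o)
    (hvB' : ∀ k, v (Sum.inl 1) (Sum.inr k) = T - c k)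
    (hvP : ∀ k g, v (Sum.inr k) g = if g = Sum.inr k then (n : ℝ) * T - 1/2 else e k g)
    (hprop : ∃ z : (Fin 2 ⊕ Fin (n - 2)) → (Fin p ⊕ Fin (n - 2)) → ℝ,
      isAlloc z ∧ (∀ i g, z i g = 0 ∨ z i g = 1) ∧
      ∀ i, (∑ g, v i g) / n ≤ ubundle v z i i) :
    ∃ X : Finset (Fin p), ∑ o ∈ X, a o = T := by
  classical
  obtain ⟨z, ⟨hz0, hz1⟩, hint, hpr⟩ := hprop
  -- T ≥ 1
  have hT1 : 1 ≤ T := by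
    have h0 : 0 < ∑ o, a o :=
      Finset.sum_pos (fun o _ => ha o) ⟨⟨0, hp⟩, mem_univ _⟩
    omega
  have hnR : (2:ℝ) ≤ (n:ℝ) := by exact_mod_cast hn
  have hn0 : (0:ℝ) < n := by linarith
  have hcard : ((Fintype.card (Fin (n-2)) : ℕ) : ℝ) = (n:ℝ) - 2 := by
    rw [Fintype.card_fin]
    push_cast [Nat.cast_sub hn]
    ring
  -- Alice's total value
  have hAtot : ∑ g, v (Sum.inl 0) g = (n:ℝ) * T := by
    rw [Fintype.sum_sum_type]
    simp only [hvA, hvA']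
    rw [Finset.sum_const, Finset.card_univ]
    have h1 : ∑ o : Fin p, ((a o : ℝ)) = 2 * T := by
      exact_mod_cast congrArg (Nat.cast : ℕ → ℝ) hasum
    rw [h1, nsmul_eq_mul, hcard]
    ring
  -- Bob's total value
  have hBtot : ∑ g, v (Sum.inl 1) g = (n:ℝ) * T := by
    rw [Fintype.sum_sum_type]
    simp only [hvB, hvB']
    rw [Finset.sum_add_distrib, Finset.sum_sub_distrib, hbsum, hcsum,
      Finset.sum_const, Finset.card_univ]
    have h1 : ∑ o : Fin p, ((a o : ℝ)) = 2 * T := by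
      exact_mod_cast congrArg (Nat.cast : ℕ → ℝ) hasum
    rw [h1, nsmul_eq_mul, hcard]
    ring
  -- Personal agents' total value
  have hPtot : ∀ k, ∑ g, v (Sum.inr k) g = (n:ℝ) * T := by
    intro k
    rw [← Finset.sum_erase_add _ _ (mem_univ (Sum.inr k : Fin p ⊕ Fin (n-2)))]
    have h1 : ∑ g ∈ univ.erase (Sum.inr k), v (Sum.inr k) g
        = ∑ g ∈ univ.erase (Sum.inr k), e k g := by
      apply Finset.sum_congr rfl
      intro g hg
      rw [hvP, if_neg (Finset.ne_of_mem_erase hg)]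
    rw [h1, hesum, hvP, if_pos rfl]
    ring
  have hdivT : (n:ℝ) * T / n = T := by field_simp
  have hzle1 : ∀ i g, z i g ≤ 1 := by
    intro i g
    rcases hint i g with h | h <;> simp [h]
  -- each personal agent gets its own good
  have hown : ∀ k, z (Sum.inr k) (Sum.inr k) = 1 := by
    intro k
    rcases hint (Sum.inr k) (Sum.inr k) with h | h
    · exfalso
      have hu : ubundle v z (Sum.inr k) (Sum.inr k) ≤ 1/2 := by
        unfold ubundle
        rw [← Finset.sum_erase_add _ _ (mem_univ (Sum.inr k : Fin p ⊕ Fin (n-2))), h,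
          mul_zero, add_zero]
        calc ∑ g ∈ univ.erase (Sum.inr k), v (Sum.inr k) g * z (Sum.inr k) g
            ≤ ∑ g ∈ univ.erase (Sum.inr k), e k g := by
              apply Finset.sum_le_sum
              intro g hg
              rw [hvP, if_neg (Finset.ne_of_mem_erase hg)]
              calc e k g * z (Sum.inr k) g ≤ e k g * 1 := by
                    exact mul_le_mul_of_nonneg_left (hzle1 _ _) (le_of_lt (he k g))
                _ = e k g := mul_one _
          _ = 1/2 := hesum k
      have hp' := hpr (Sum.inr k)
      rw [hPtot k] at hp'
      rw [hdivT] at hp'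
      have : (1:ℝ) ≤ T := by exact_mod_cast hT1
      linarith
    · exact h
  -- Alice/Bob get no personal goods
  have hAz : ∀ k, z (Sum.inl 0) (Sum.inr k) = 0 := fun k =>
    aux_zero (fun i => z i (Sum.inr k)) (fun i => hz0 i _) (hz1 _)
      (by simp) (hown k)
  have hBz : ∀ k, z (Sum.inl 1) (Sum.inr k) = 0 := fun k =>
    aux_zero (fun i => z i (Sum.inr k)) (fun i => hz0 i _) (hz1 _)
      (by simp) (hown k)
  -- bundles of Alice and Bob
  set X : Finset (Fin p) := univ.filter (fun o => z (Sum.inl 0) (Sum.inl o) = 1) with hX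
  set Y : Finset (Fin p) := univ.filter (fun o => z (Sum.inl 1) (Sum.inl o) = 1) with hY
  have hAu : ubundle v z (Sum.inl 0) (Sum.inl 0) = ∑ o ∈ X, (a o : ℝ) := by
    unfold ubundle
    rw [Fintype.sum_sum_type]
    have h2 : ∑ k, v (Sum.inl 0) (Sum.inr k) * z (Sum.inl 0) (Sum.inr k) = 0 := by
      apply Finset.sum_eq_zero; intro k _; rw [hAz k, mul_zero]
    rw [h2, add_zero, Finset.sum_filter]
    apply Finset.sum_congr rfl
    intro o _
    rw [hvA]
    rcases hint (Sum.inl 0) (Sum.inl o) with h | h <;> simp [h]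
  have hBu : ubundle v z (Sum.inl 1) (Sum.inl 1) = ∑ o ∈ Y, ((a o : ℝ) + b o) := by
    unfold ubundle
    rw [Fintype.sum_sum_type]
    have h2 : ∑ k, v (Sum.inl 1) (Sum.inr k) * z (Sum.inl 1) (Sum.inr k) = 0 := by
      apply Finset.sum_eq_zero; intro k _; rw [hBz k, mul_zero]
    rw [h2, add_zero, Finset.sum_filter]
    apply Finset.sum_congr rfl
    intro o _
    rw [hvB]
    rcases hint (Sum.inl 1) (Sum.inl o) with h | h <;> simp [h]
  -- proportionality bounds
  have hA' := hpr (Sum.inl 0)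
  rw [hAtot, hdivT, hAu] at hA'
  have hB' := hpr (Sum.inl 1)
  rw [hBtot, hdivT, hBu] at hB'
  rw [Finset.sum_add_distrib] at hB'
  have hbY : ∑ o ∈ Y, b o ≤ 1/2 := by
    rw [← hbsum]
    exact Finset.sum_le_sum_of_subset_of_nonneg (Finset.subset_univ Y)
      (fun o _ _ => le_of_lt (hb o))
  -- disjointness
  have hdisj : Disjoint X Y := by
    rw [Finset.disjoint_left]
    intro o hoX hoY
    rw [hX, mem_filter] at hoX
    rw [hY, mem_filter] at hoY
    have h0 : z (Sum.inl 0) (Sum.inl o) = 0 :=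
      aux_zero (fun i => z i (Sum.inl o)) (fun i => hz0 i _) (hz1 _)
        (by simp [Fin.ext_iff]) hoY.2
    rw [hoX.2] at h0
    norm_num at h0
  have hsum_le : ∑ o ∈ X, a o + ∑ o ∈ Y, a o ≤ 2 * T := by
    rw [← Finset.sum_union hdisj, ← hasum]
    exact Finset.sum_le_sum_of_subset (Finset.subset_univ _)
  -- conclude
  have hSA : T ≤ ∑ o ∈ X, a o := by
    have h2 : (T:ℝ) ≤ ((∑ o ∈ X, a o : ℕ) : ℝ) := by push_cast; exact hA'
    exact_mod_cast h2
  have hSB : T ≤ ∑ o ∈ Y, a o := by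
    have h1 : (T:ℝ) < (∑ o ∈ Y, (a o : ℝ)) + 1 := by linarith
    have h2 : (T:ℝ) < ((∑ o ∈ Y, a o : ℕ) : ℝ) + 1 := by push_cast at h1 ⊢; linarith
    have : T < (∑ o ∈ Y, a o) + 1 := by exact_mod_cast h2
    omega
  refine ⟨X, ?_⟩
  omega
end

section
/- If z is an envy-free integral allocation in the zero-sharings reduction instance and y is a discrete-Pareto-optimal integral allocation that weakly Pareto-dominates z, then y is also envy-free. -/
open Finset

lemma alloc_eq_zero_of_ne {A G : Type*} [Fintype A] [Fintype G] [DecidableEq A]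
    (w : A → G → ℝ) (hw : isAlloc w) {i₀ j : A} {g : G}
    (h1 : w i₀ g = 1) (hne : j ≠ i₀) : w j g = 0 := by
  have hs := hw.2 g
  rw [← Finset.sum_erase_add _ _ (Finset.mem_univ i₀), h1] at hs
  have h0 : ∑ i ∈ Finset.univ.erase i₀, w i g = 0 := by linarith
  have := (Finset.sum_eq_zero_iff_of_nonneg (fun i _ => hw.1 i g)).mp h0
  exact this j (Finset.mem_erase.mpr ⟨hne, Finset.mem_univ j⟩)

/-- In the zero-sharings reduction instance, if `z` is the envy-free integral allocation
coming from an equal-sum partition (each personal agent gets exactly his personal good,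
Alice's utility is exactly `T`), and `y` is a discrete-Pareto-optimal integral allocation
weakly Pareto-dominating `z`, then `y` is envy-free as well. -/
theorem dpo_dominating_is_envy_free (n p : ℕ) (hn : 2 ≤ n) (hp : 0 < p) (T : ℕ)
    (a : Fin p → ℕ) (ha : ∀ o, 0 < a o) (hasum : ∑ o, a o = 2 * T)
    (b : Fin p → ℝ) (hb : ∀ o, 0 < b o) (hbsum : ∑ o, b o = 1/2)
    (c : Fin (n - 2) → ℝ) (hc : ∀ k, 0 < c k) (hcsum : ∑ k, c k = 1/2)
    (e : Fin (n - 2) → (Fin p ⊕ Fin (n - 2)) → ℝ) (he : ∀ k g, 0 < e k g)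
    (hesum : ∀ k, ∑ g ∈ univ.erase (Sum.inr k), e k g = 1/2)
    (v : (Fin 2 ⊕ Fin (n - 2)) → (Fin p ⊕ Fin (n - 2)) → ℝ)
    (hvA : ∀ o, v (Sum.inl 0) (Sum.inl o) = a o)
    (hvA' : ∀ k, v (Sum.inl 0) (Sum.inr k) = T)
    (hvB : ∀ o, v (Sum.inl 1) (Sum.inl o) = a o + b o)
    (hvB' : ∀ k, v (Sum.inl 1) (Sum.inr k) = T - c k)
    (hvP : ∀ k g, v (Sum.inr k) g = if g = Sum.inr k then (n : ℝ) * T - 1/2 else e k g)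
    -- `z`: the envy-free integral allocation from an equal-sum partition
    (z : (Fin 2 ⊕ Fin (n - 2)) → (Fin p ⊕ Fin (n - 2)) → ℝ)
    (hz : isAlloc z) (hzint : ∀ i g, z i g = 0 ∨ z i g = 1)
    (hzEF : ∀ i j, ubundle v z i j ≤ ubundle v z i i)
    (hzpers : ∀ k g, z (Sum.inr k) g = if g = Sum.inr k then 1 else 0)
    (hzA : ubundle v z (Sum.inl 0) (Sum.inl 0) = T)
    -- `y`: an integral dPO allocation weakly Pareto-dominating `z`
    (y : (Fin 2 ⊕ Fin (n - 2)) → (Fin p ⊕ Fin (n - 2)) → ℝ)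
    (hy : isAlloc y) (hyint : ∀ i g, y i g = 0 ∨ y i g = 1)
    (hdom : ∀ i, ubundle v z i i ≤ ubundle v y i i)
    (hdPO : ¬ ∃ y' : (Fin 2 ⊕ Fin (n - 2)) → (Fin p ⊕ Fin (n - 2)) → ℝ,
      isAlloc y' ∧ (∀ i g, y' i g = 0 ∨ y' i g = 1) ∧
      (∀ i, ubundle v y i i ≤ ubundle v y' i i) ∧
      ∃ i, ubundle v y i i < ubundle v y' i i) :
    ∀ i j, ubundle v y i j ≤ ubundle v y i i := by
  clear hdPO
  -- basic numeric facts
  have hT : 1 ≤ T := by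
    have h2 : 0 < ∑ o, a o := Finset.sum_pos (fun o _ => ha o) ⟨⟨0, hp⟩, Finset.mem_univ _⟩
    rw [hasum] at h2; omega
  have hnT : (2:ℝ) ≤ (n:ℝ) * T := by
    have h2 : 2 * 1 ≤ n * T := Nat.mul_le_mul hn hT
    calc (2:ℝ) = ((2*1 : ℕ):ℝ) := by norm_num
    _ ≤ ((n*T : ℕ):ℝ) := Nat.cast_le.mpr h2
    _ = (n:ℝ)*T := by push_cast; ring
  have hcast2T : ∑ o, (a o : ℝ) = 2 * T := by
    rw [← Nat.cast_sum, hasum]; push_cast; ring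
  -- z structure facts
  have hzA0 : ∀ k, z (Sum.inl 0) (Sum.inr k) = 0 := fun k =>
    alloc_eq_zero_of_ne z hz (by rw [hzpers, if_pos rfl]) (by simp)
  have hzB0 : ∀ k, z (Sum.inl 1) (Sum.inr k) = 0 := fun k =>
    alloc_eq_zero_of_ne z hz (by rw [hzpers, if_pos rfl]) (by simp)
  have hzNo : ∀ k o, z (Sum.inr k) (Sum.inl o) = 0 := fun k o => by
    rw [hzpers, if_neg (by simp)]
  have hzsum : ∀ o, z (Sum.inl 0) (Sum.inl o) + z (Sum.inl 1) (Sum.inl o) = 1 := by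
    intro o
    have hs := hz.2 (Sum.inl o)
    rw [Fintype.sum_sum_type, Fin.sum_univ_two] at hs
    have h0 : ∑ k, z (Sum.inr k) (Sum.inl o) = 0 :=
      Finset.sum_eq_zero (fun k _ => hzNo k o)
    rw [h0] at hs; linarith
  have hA_A : ∑ o, (a o : ℝ) * z (Sum.inl 0) (Sum.inl o) = T := by
    have h := hzA
    unfold ubundle at h
    rw [Fintype.sum_sum_type] at h
    simp only [hvA, hvA', hzA0, mul_zero, Finset.sum_const_zero, add_zero] at h
    exact h
  have hA_AB : ∑ o, (a o : ℝ) * z (Sum.inl 0) (Sum.inl o)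
      + ∑ o, (a o : ℝ) * z (Sum.inl 1) (Sum.inl o) = 2 * T := by
    rw [← Finset.sum_add_distrib, ← hcast2T]
    exact Finset.sum_congr rfl fun o _ => by rw [← mul_add, hzsum o, mul_one]
  have hA_B : ∑ o, (a o : ℝ) * z (Sum.inl 1) (Sum.inl o) = T := by linarith
  have hbz : ∑ o, b o * z (Sum.inl 0) (Sum.inl o)
      + ∑ o, b o * z (Sum.inl 1) (Sum.inl o) = 1/2 := by
    rw [← Finset.sum_add_distrib, ← hbsum]
    exact Finset.sum_congr rfl fun o _ => by rw [← mul_add, hzsum o, mul_one]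
  have hzB : ubundle v z (Sum.inl 1) (Sum.inl 1)
      = T + ∑ o, b o * z (Sum.inl 1) (Sum.inl o) := by
    unfold ubundle
    rw [Fintype.sum_sum_type]
    simp only [hvB, hvB', hzB0, mul_zero, Finset.sum_const_zero, add_zero, add_mul]
    rw [Finset.sum_add_distrib, hA_B]
  have hzBA : ubundle v z (Sum.inl 1) (Sum.inl 0)
      = T + ∑ o, b o * z (Sum.inl 0) (Sum.inl o) := by
    unfold ubundle
    rw [Fintype.sum_sum_type]
    simp only [hvB, hvB', hzA0, mul_zero, Finset.sum_const_zero, add_zero, add_mul]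
    rw [Finset.sum_add_distrib, hA_A]
  have hβz : (1/4 : ℝ) ≤ ∑ o, b o * z (Sum.inl 1) (Sum.inl o) := by
    have h := hzEF (Sum.inl 1) (Sum.inl 0)
    rw [hzB, hzBA] at h; linarith
  -- y basic facts
  have hyle1 : ∀ i g, y i g ≤ 1 := fun i g => by
    rcases hyint i g with h | h <;> rw [h] <;> norm_num
  have hzP : ∀ k, ubundle v z (Sum.inr k) (Sum.inr k) = (n:ℝ) * T - 1/2 := by
    intro k
    unfold ubundle
    rw [Finset.sum_eq_single (Sum.inr k)]
    · rw [hzpers, if_pos rfl, hvP, if_pos rfl, mul_one]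
    · intro g _ hg; rw [hzpers, if_neg hg, mul_zero]
    · intro h; exact absurd (Finset.mem_univ _) h
  have hyP1 : ∀ k, y (Sum.inr k) (Sum.inr k) = 1 := by
    intro k
    rcases hyint (Sum.inr k) (Sum.inr k) with h0 | h1
    · exfalso
      have hd := hdom (Sum.inr k)
      rw [hzP k] at hd
      have hub : ubundle v y (Sum.inr k) (Sum.inr k) ≤ 1/2 := by
        unfold ubundle
        rw [← Finset.sum_erase_add _ _ (Finset.mem_univ (Sum.inr k)), h0, mul_zero, add_zero]
        rw [← hesum k]
        refine Finset.sum_le_sum fun g hg => ?_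
        rw [hvP, if_neg (Finset.mem_erase.mp hg).1]
        calc e k g * y (Sum.inr k) g ≤ e k g * 1 :=
              mul_le_mul_of_nonneg_left (hyle1 _ _) (le_of_lt (he k g))
        _ = e k g := mul_one _
      linarith
    · exact h1
  have hy0 : ∀ k j, j ≠ Sum.inr k → y j (Sum.inr k) = 0 :=
    fun k j hj => alloc_eq_zero_of_ne y hy (hyP1 k) hj
  -- y utilities of Alice and Bob
  have hyuA : ubundle v y (Sum.inl 0) (Sum.inl 0)
      = ∑ o, (a o : ℝ) * y (Sum.inl 0) (Sum.inl o) := by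
    unfold ubundle
    rw [Fintype.sum_sum_type]
    simp only [hvA, hvA']
    have h0 : ∑ k, (T:ℝ) * y (Sum.inl 0) (Sum.inr k) = 0 :=
      Finset.sum_eq_zero fun k _ => by rw [hy0 k _ (by simp), mul_zero]
    rw [h0, add_zero]
  have hyuB : ubundle v y (Sum.inl 1) (Sum.inl 1)
      = ∑ o, (a o : ℝ) * y (Sum.inl 1) (Sum.inl o)
        + ∑ o, b o * y (Sum.inl 1) (Sum.inl o) := by
    unfold ubundle
    rw [Fintype.sum_sum_type]
    simp only [hvB, hvB']
    have h0 : ∑ k, ((T:ℝ) - c k) * y (Sum.inl 1) (Sum.inr k) = 0 :=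
      Finset.sum_eq_zero fun k _ => by rw [hy0 k _ (by simp), mul_zero]
    rw [h0, add_zero]
    simp only [add_mul]
    rw [Finset.sum_add_distrib]
  have hα : (T:ℝ) ≤ ∑ o, (a o : ℝ) * y (Sum.inl 0) (Sum.inl o) := by
    have h := hdom (Sum.inl 0); rw [hzA, hyuA] at h; exact h
  have hβ'le : ∑ o, b o * y (Sum.inl 1) (Sum.inl o) ≤ 1/2 := by
    rw [← hbsum]
    refine Finset.sum_le_sum fun o _ => ?_
    calc b o * y (Sum.inl 1) (Sum.inl o) ≤ b o * 1 :=
          mul_le_mul_of_nonneg_left (hyle1 _ _) (le_of_lt (hb o))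
    _ = b o := mul_one _
  have hβ'0 : 0 ≤ ∑ o, b o * y (Sum.inl 1) (Sum.inl o) :=
    Finset.sum_nonneg fun o _ => mul_nonneg (le_of_lt (hb o)) (hy.1 _ _)
  have hAbβ : (T:ℝ) + ∑ o, b o * z (Sum.inl 1) (Sum.inl o)
      ≤ ∑ o, (a o : ℝ) * y (Sum.inl 1) (Sum.inl o)
        + ∑ o, b o * y (Sum.inl 1) (Sum.inl o) := by
    have h := hdom (Sum.inl 1); rw [hzB, hyuB] at h; exact h
  -- personal agents receive no number goods
  have hyNo : ∀ k o, y (Sum.inr k) (Sum.inl o) = 0 := by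
    intro k o
    rcases hyint (Sum.inr k) (Sum.inl o) with h | h
    · exact h
    exfalso
    have h0A : y (Sum.inl 0) (Sum.inl o) = 0 := alloc_eq_zero_of_ne y hy h (by simp)
    have h0B : y (Sum.inl 1) (Sum.inl o) = 0 := alloc_eq_zero_of_ne y hy h (by simp)
    have hsle : ∀ o', y (Sum.inl 0) (Sum.inl o') + y (Sum.inl 1) (Sum.inl o') ≤ 1 := by
      intro o'
      have hs := hy.2 (Sum.inl o')
      rw [Fintype.sum_sum_type, Fin.sum_univ_two] at hs
      have h0 : 0 ≤ ∑ k, y (Sum.inr k) (Sum.inl o') :=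
        Finset.sum_nonneg fun k _ => hy.1 _ _
      linarith
    have hkey : ∑ o', (a o' : ℝ) * y (Sum.inl 0) (Sum.inl o')
        + ∑ o', (a o' : ℝ) * y (Sum.inl 1) (Sum.inl o') ≤ 2 * T - a o := by
      rw [← Finset.sum_add_distrib]
      have h1 : ∑ o', ((a o' : ℝ) * y (Sum.inl 0) (Sum.inl o')
          + (a o' : ℝ) * y (Sum.inl 1) (Sum.inl o'))
          = ∑ o' ∈ univ.erase o, ((a o' : ℝ) * y (Sum.inl 0) (Sum.inl o')
            + (a o' : ℝ) * y (Sum.inl 1) (Sum.inl o')) := by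
        rw [Finset.sum_erase_eq_sub (Finset.mem_univ o), h0A, h0B, mul_zero, add_zero, sub_zero]
      rw [h1]
      have h2 : ∑ o' ∈ univ.erase o, ((a o' : ℝ) * y (Sum.inl 0) (Sum.inl o')
            + (a o' : ℝ) * y (Sum.inl 1) (Sum.inl o'))
          ≤ ∑ o' ∈ univ.erase o, (a o' : ℝ) := by
        refine Finset.sum_le_sum fun o' _ => ?_
        have := hsle o'
        have ha' : (0:ℝ) ≤ a o' := Nat.cast_nonneg _
        nlinarith [hy.1 (Sum.inl 0) (Sum.inl o'), hy.1 (Sum.inl 1) (Sum.inl o')]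
      have h3 : ∑ o' ∈ univ.erase o, (a o' : ℝ) = 2 * T - a o := by
        rw [Finset.sum_erase_eq_sub (Finset.mem_univ o), hcast2T]
      linarith
    have hao : (1:ℝ) ≤ a o := by exact_mod_cast ha o
    linarith
  -- number goods are split between Alice and Bob
  have hssum : ∀ o, y (Sum.inl 0) (Sum.inl o) + y (Sum.inl 1) (Sum.inl o) = 1 := by
    intro o
    have hs := hy.2 (Sum.inl o)
    rw [Fintype.sum_sum_type, Fin.sum_univ_two] at hs
    have h0 : ∑ k, y (Sum.inr k) (Sum.inl o) = 0 :=
      Finset.sum_eq_zero (fun k _ => hyNo k o)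
    rw [h0] at hs; linarith
  have hyA_AB : ∑ o, (a o : ℝ) * y (Sum.inl 0) (Sum.inl o)
      + ∑ o, (a o : ℝ) * y (Sum.inl 1) (Sum.inl o) = 2 * T := by
    rw [← Finset.sum_add_distrib, ← hcast2T]
    exact Finset.sum_congr rfl fun o _ => by rw [← mul_add, hssum o, mul_one]
  -- Alice's utility in y is exactly T
  have hαT : ∑ o, (a o : ℝ) * y (Sum.inl 0) (Sum.inl o) = T := by
    obtain ⟨m, hm⟩ : ∃ m : ℕ, (m:ℝ) = ∑ o, (a o : ℝ) * y (Sum.inl 0) (Sum.inl o) := by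
      refine ⟨∑ o, if y (Sum.inl 0) (Sum.inl o) = 0 then 0 else a o, ?_⟩
      rw [Nat.cast_sum]
      refine Finset.sum_congr rfl fun o _ => ?_
      rcases hyint (Sum.inl 0) (Sum.inl o) with h | h
      · simp [h]
      · rw [h, if_neg one_ne_zero, mul_one]
    have hup : (m:ℝ) ≤ T + 1/4 := by rw [hm]; linarith
    have hlo : T ≤ m := by exact_mod_cast hm ▸ hα
    have hup' : m < T + 1 := by
      have : (m:ℝ) < ((T+1 : ℕ):ℝ) := by push_cast; linarith
      exact_mod_cast this
    have : m = T := by omega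
    rw [← hm, this]
  have hβ'ge : (1/4:ℝ) ≤ ∑ o, b o * y (Sum.inl 1) (Sum.inl o) := by
    have hAb : ∑ o, (a o : ℝ) * y (Sum.inl 1) (Sum.inl o) = T := by linarith
    linarith
  have hbAy : ∑ o, b o * y (Sum.inl 0) (Sum.inl o)
      + ∑ o, b o * y (Sum.inl 1) (Sum.inl o) = 1/2 := by
    rw [← Finset.sum_add_distrib, ← hbsum]
    exact Finset.sum_congr rfl fun o _ => by rw [← mul_add, hssum o, mul_one]
  -- personal agents' bundles in y are exactly their personal goods
  have hypers : ∀ k g, y (Sum.inr k) g = if g = Sum.inr k then 1 else 0 := by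
    intro k g
    rcases g with o | j
    · rw [if_neg (by simp)]; exact hyNo k o
    · by_cases hj : j = k
      · subst hj; rw [if_pos rfl]; exact hyP1 _
      · rw [if_neg (by simp [hj])]
        exact hy0 j _ (by simp only [ne_eq, Sum.inr.injEq]; exact Ne.symm hj)
  have hu_single : ∀ (i : Fin 2 ⊕ Fin (n-2)) k,
      ubundle v y i (Sum.inr k) = v i (Sum.inr k) := by
    intro i k
    unfold ubundle
    rw [Finset.sum_eq_single (Sum.inr k : Fin p ⊕ Fin (n-2))]
    · rw [hypers, if_pos rfl, mul_one]
    · intro g _ hg; rw [hypers, if_neg hg, mul_zero]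
    · intro h; exact absurd (Finset.mem_univ _) h
  have hyPP : ∀ k, ubundle v y (Sum.inr k) (Sum.inr k) = (n:ℝ) * T - 1/2 := by
    intro k; rw [hu_single, hvP, if_pos rfl]
  have hPno : ∀ k j, j ≠ Sum.inr k → ubundle v y (Sum.inr k) j ≤ 1/2 := by
    intro k j hj
    unfold ubundle
    rw [← Finset.sum_erase_add _ _ (Finset.mem_univ (Sum.inr k)), hy0 k j hj, mul_zero, add_zero]
    rw [← hesum k]
    refine Finset.sum_le_sum fun g hg => ?_
    rw [hvP, if_neg (Finset.mem_erase.mp hg).1]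
    calc e k g * y j g ≤ e k g * 1 :=
          mul_le_mul_of_nonneg_left (hyle1 _ _) (le_of_lt (he k g))
    _ = e k g := mul_one _
  have hyuAT : ubundle v y (Sum.inl 0) (Sum.inl 0) = T := by rw [hyuA, hαT]
  have hyuAB : ubundle v y (Sum.inl 0) (Sum.inl 1) = T := by
    unfold ubundle
    rw [Fintype.sum_sum_type]
    simp only [hvA, hvA']
    have h0 : ∑ k, (T:ℝ) * y (Sum.inl 1) (Sum.inr k) = 0 :=
      Finset.sum_eq_zero fun k _ => by rw [hy0 k _ (by simp), mul_zero]
    rw [h0, add_zero]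
    linarith
  have hyuBB : ubundle v y (Sum.inl 1) (Sum.inl 1)
      = T + ∑ o, b o * y (Sum.inl 1) (Sum.inl o) := by
    rw [hyuB]
    have : ∑ o, (a o : ℝ) * y (Sum.inl 1) (Sum.inl o) = T := by linarith
    rw [this]
  have hyuBA : ubundle v y (Sum.inl 1) (Sum.inl 0)
      = T + ∑ o, b o * y (Sum.inl 0) (Sum.inl o) := by
    unfold ubundle
    rw [Fintype.sum_sum_type]
    simp only [hvB, hvB']
    have h0 : ∑ k, ((T:ℝ) - c k) * y (Sum.inl 0) (Sum.inr k) = 0 :=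
      Finset.sum_eq_zero fun k _ => by rw [hy0 k _ (by simp), mul_zero]
    rw [h0, add_zero]
    simp only [add_mul]
    rw [Finset.sum_add_distrib, hαT]
  -- final envy-freeness check
  intro i j
  rcases i with f | k
  · have hf : f = 0 ∨ f = 1 := by omega
    rcases hf with hf | hf <;> subst hf
    · -- Alice
      rw [hyuAT]
      rcases j with f' | k'
      · have hf' : f' = 0 ∨ f' = 1 := by omega
        rcases hf' with hf' | hf' <;> subst hf'
        · rw [hyuAT]
        · rw [hyuAB]
      · rw [hu_single, hvA']
    · -- Bob
      rw [hyuBB]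
      rcases j with f' | k'
      · have hf' : f' = 0 ∨ f' = 1 := by omega
        rcases hf' with hf' | hf' <;> subst hf'
        · rw [hyuBA]; linarith
        · rw [hyuBB]
      · rw [hu_single, hvB']
        have := hc k'
        linarith
  · -- personal agent k
    by_cases hj : j = Sum.inr k
    · subst hj; exact le_rfl
    · rw [hyPP]
      calc ubundle v y (Sum.inr k) j ≤ 1/2 := hPno k j hj
      _ ≤ (n:ℝ) * T - 1/2 := by linarith
end
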